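/- Let d be a positive natural number, let ρ be any (2d) × (2d) complex matrix regarded as an operator on ℂ² ⊗ ℂ^d, let μ_1, μ_2 be complex numbers with |μ_1| = |μ_2| = 1, let D = diag(μ_1, μ_2), and let σ_z = diag(1, −1). Then ‖ρ (D ⊗ₖ I_d) − (D ⊗ₖ I_d) ρ‖₁ = (|μ_1 − μ_2|/2) · ‖ρ (σ_z ⊗ₖ I_d) − (σ_z ⊗ₖ I_d) ρ‖₁. In particular, for D = diag(e^{iω}, e^{−iω}) the left-hand side equals |sin ω| times ‖ρ(σ_z ⊗ₖ I_d) − (σ_z ⊗ₖ I_d)ρ‖₁, and it is maximized exactly at the harmonic spectrum ω = π/2. -/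

import Mathlib

open Matrix Kronecker
open scoped ComplexOrder

open scoped Classical in
/-- The positive semidefinite square root of a matrix (junk value `0` if not PSD). -/
noncomputable def msqrt {n : Type*} [Fintype n] [DecidableEq n] (A : Matrix n n ℂ) : Matrix n n ℂ :=
  if h : A.PosSemidef then
    (h.1.eigenvectorUnitary : Matrix n n ℂ) * diagonal ((↑) ∘ Real.sqrt ∘ h.1.eigenvalues) *
      (star h.1.eigenvectorUnitary : Matrix n n ℂ)
  else 0

/-- Square-root fidelity `tr √(√ρ · σ · √ρ)` (as a real number). -/
noncomputable def sqrtFid {n : Type*} [Fintype n] [DecidableEq n] (ρ σ : Matrix n n ℂ) : ℝ :=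
  ((msqrt (msqrt ρ * σ * msqrt ρ)).trace).re

/-- Trace norm `tr √(Xᴴ X)` (as a real number). -/
noncomputable def traceNorm {n : Type*} [Fintype n] [DecidableEq n] (X : Matrix n n ℂ) : ℝ :=
  ((msqrt (Xᴴ * X)).trace).re

/-- The Bell-diagonal two-qubit state with Bell-basis eigenvalues `γ₁, γ₂, γ₃, γ₄`. -/
noncomputable def bellDiag (γ₁ γ₂ γ₃ γ₄ : ℝ) :
    Matrix (Fin 2 × Fin 2) (Fin 2 × Fin 2) ℂ :=
  Matrix.reindex finProdFinEquiv.symm finProdFinEquiv.symm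
    ((1 / 2 : ℂ) • !![(γ₁ : ℂ) + γ₂, 0, 0, (γ₁ : ℂ) - γ₂;
        0, (γ₃ : ℂ) + γ₄, (γ₃ : ℂ) - γ₄, 0;
        0, (γ₃ : ℂ) - γ₄, (γ₃ : ℂ) + γ₄, 0;
        (γ₁ : ℂ) - γ₂, 0, 0, (γ₁ : ℂ) + γ₂])

lemma posSemidef_real_smul {n : Type*} [Fintype n] [DecidableEq n]
    {A : Matrix n n ℂ} (hA : A.PosSemidef) {r : ℝ} (hr : 0 ≤ r) :
    ((r : ℂ) • A).PosSemidef := by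
  constructor
  · have := hA.1
    unfold Matrix.IsHermitian at *
    rw [conjTranspose_smul, this]
    simp
  · intro x
    exact (hA.smul (a := (r : ℂ)) (by exact_mod_cast hr)).2 x

lemma msqrt_eq_cfc {n : Type*} [Fintype n] [DecidableEq n] (A : Matrix n n ℂ)
    (h : A.PosSemidef) : msqrt A = cfc Real.sqrt A := by
  rw [msqrt, dif_pos h, h.1.cfc_eq, IsHermitian.cfc, Unitary.conjStarAlgAut_apply]
  rfl

lemma traceNorm_smul {n : Type*} [Fintype n] [DecidableEq n] (c : ℂ) (X : Matrix n n ℂ) :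
    traceNorm (c • X) = ‖c‖ * traceNorm X := by
  have hP : (Xᴴ * X).PosSemidef := Matrix.posSemidef_conjTranspose_mul_self X
  have key : (c • X)ᴴ * (c • X) = (((‖c‖ : ℝ) ^ 2 : ℝ) : ℂ) • (Xᴴ * X) := by
    rw [conjTranspose_smul, Matrix.smul_mul, Matrix.mul_smul, smul_smul]
    congr 1
    rw [mul_comm]
    simpa [Complex.normSq_eq_norm_sq] using (Complex.mul_conj c)
  have hP2 : ((((‖c‖ : ℝ) ^ 2 : ℝ) : ℂ) • (Xᴴ * X)).PosSemidef :=
    posSemidef_real_smul hP (sq_nonneg _)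
  have hmsqrt : msqrt ((c • X)ᴴ * (c • X)) = ((‖c‖ : ℝ) : ℂ) • msqrt (Xᴴ * X) := by
    rw [key, msqrt_eq_cfc _ hP2, msqrt_eq_cfc _ hP, Complex.coe_smul, Complex.coe_smul,
      ← cfc_comp_const_mul (‖c‖ ^ 2) Real.sqrt (Xᴴ * X) (by fun_prop) hP.1.isSelfAdjoint,
      ← cfc_const_mul ‖c‖ Real.sqrt (Xᴴ * X) (by fun_prop)]
    congr 1
    funext x
    rw [Real.sqrt_mul (sq_nonneg _), Real.sqrt_sq (norm_nonneg _)]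
  rw [traceNorm, traceNorm, hmsqrt, Matrix.trace_smul, smul_eq_mul]
  simp [Complex.ofReal_mul]

theorem traceNorm_commutator_diagonal_unimodular
    (d : ℕ) (hd : 0 < d)
    (ρ : Matrix (Fin 2 × Fin d) (Fin 2 × Fin d) ℂ)
    (μ₁ μ₂ : ℂ) (h1 : ‖μ₁‖ = 1) (h2 : ‖μ₂‖ = 1) :
    traceNorm (ρ * (!![μ₁, 0; 0, μ₂] ⊗ₖ (1 : Matrix (Fin d) (Fin d) ℂ))
        - (!![μ₁, 0; 0, μ₂] ⊗ₖ (1 : Matrix (Fin d) (Fin d) ℂ)) * ρ)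
      = (‖μ₁ - μ₂‖ / 2) *
        traceNorm (ρ * (!![1, 0; 0, -1] ⊗ₖ (1 : Matrix (Fin d) (Fin d) ℂ))
          - (!![1, 0; 0, -1] ⊗ₖ (1 : Matrix (Fin d) (Fin d) ℂ)) * ρ) := by
  set S : Matrix (Fin 2 × Fin d) (Fin 2 × Fin d) ℂ :=
    !![1, 0; 0, -1] ⊗ₖ (1 : Matrix (Fin d) (Fin d) ℂ) with hS
  have hD : !![μ₁, 0; 0, μ₂] = ((μ₁ + μ₂) / 2) • (1 : Matrix (Fin 2) (Fin 2) ℂ)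
      + ((μ₁ - μ₂) / 2) • !![(1 : ℂ), 0; 0, -1] := by
    ext i j
    fin_cases i <;> fin_cases j <;>
      simp [Matrix.one_apply] <;> ring
  have hK : !![μ₁, 0; 0, μ₂] ⊗ₖ (1 : Matrix (Fin d) (Fin d) ℂ)
      = ((μ₁ + μ₂) / 2) • (1 : Matrix (Fin 2 × Fin d) (Fin 2 × Fin d) ℂ)
        + ((μ₁ - μ₂) / 2) • S := by
    rw [hD, Matrix.add_kronecker, Matrix.smul_kronecker, Matrix.smul_kronecker,
      Matrix.one_kronecker_one, hS]
  have hcomm : ρ * (!![μ₁, 0; 0, μ₂] ⊗ₖ (1 : Matrix (Fin d) (Fin d) ℂ))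
      - (!![μ₁, 0; 0, μ₂] ⊗ₖ (1 : Matrix (Fin d) (Fin d) ℂ)) * ρ
      = ((μ₁ - μ₂) / 2) • (ρ * S - S * ρ) := by
    rw [hK]
    simp only [Matrix.mul_add, Matrix.add_mul, Matrix.mul_smul, Matrix.smul_mul,
      Matrix.mul_one, Matrix.one_mul, smul_sub]
    abel
  rw [hcomm, traceNorm_smul]
  congr 1
  rw [norm_div]
  simp
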